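/- arXiv:1701.06539 — 8 statements merged into one kernel-verified Lean document; each statement's English description precedes it below -/
import Mathlib

section
/- If a scoring method satisfies symmetry (SYM) and strong order preservation (SOP), then it satisfies inversion (INV). -/
open Finset

/-- A ranking problem: skew-symmetric results matrix `R`, symmetric
nonnegative-integer matches matrix `M`, with `|R i j| ≤ M i j`. -/
structure RP (n : ℕ) where
  R : Fin n → Fin n → ℝ
  M : Fin n → Fin n → ℕ
  skew : ∀ i j, R j i = - R i j
  symm : ∀ i j, M j i = M i j
  bound : ∀ i j, |R i j| ≤ (M i j : ℝ)

/-- Sum of two ranking problems. -/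
def RP.add {n : ℕ} (P Q : RP n) : RP n where
  R i j := P.R i j + Q.R i j
  M i j := P.M i j + Q.M i j
  skew i j := by rw [P.skew i j, Q.skew i j]; ring
  symm i j := by rw [P.symm i j, Q.symm i j]
  bound i j := by
    calc |P.R i j + Q.R i j| ≤ |P.R i j| + |Q.R i j| := abs_add_le _ _
      _ ≤ (P.M i j : ℝ) + (Q.M i j : ℝ) := add_le_add (P.bound i j) (Q.bound i j)
      _ = ((P.M i j + Q.M i j : ℕ) : ℝ) := by push_cast; ring

/-- The ranking problem with all results reversed. -/
def RP.neg {n : ℕ} (P : RP n) : RP n where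
  R i j := - P.R i j
  M := P.M
  skew i j := by rw [P.skew i j]
  symm := P.symm
  bound i j := by simpa using P.bound i j

/-- Relabelling the players by a permutation. -/
def RP.relabel {n : ℕ} (σ : Equiv.Perm (Fin n)) (P : RP n) : RP n where
  R i j := P.R (σ.symm i) (σ.symm j)
  M i j := P.M (σ.symm i) (σ.symm j)
  skew i j := P.skew _ _
  symm i j := P.symm _ _
  bound i j := P.bound _ _

/-- All players have played `m` matches. -/
def RPBalanced {n : ℕ} (P : RP n) (m : ℕ) : Prop := ∀ i, ∑ j, P.M i j = m

/-- Symmetry (SYM): if all results are draws, all scores are equal. -/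
def SYM {n : ℕ} (f : RP n → Fin n → ℝ) : Prop :=
  ∀ P : RP n, (∀ i j, P.R i j = 0) → ∀ i j, f P i = f P j

/-- Inversion (INV). -/
def INV {n : ℕ} (f : RP n → Fin n → ℝ) : Prop :=
  ∀ P : RP n, ∀ i j, f P i ≥ f P j ↔ f P.neg i ≤ f P.neg j

/-- Order preservation (OP). -/
def OP {n : ℕ} (f : RP n → Fin n → ℝ) : Prop :=
  ∀ P Q : RP n, ∀ m m' : ℕ, RPBalanced P m → RPBalanced Q m' →
    ∀ i j, f P i ≥ f P j → f Q i ≥ f Q j →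
      f (P.add Q) i ≥ f (P.add Q) j ∧
      ((f P i > f P j ∨ f Q i > f Q j) → f (P.add Q) i > f (P.add Q) j)

/-- Strong order preservation (SOP). -/
def SOP {n : ℕ} (f : RP n → Fin n → ℝ) : Prop :=
  ∀ P Q : RP n, ∀ i j, f P i ≥ f P j → f Q i ≥ f Q j →
      f (P.add Q) i ≥ f (P.add Q) j ∧
      ((f P i > f P j ∨ f Q i > f Q j) → f (P.add Q) i > f (P.add Q) j)

/-- Neutrality (NEU). -/
def NEU {n : ℕ} (f : RP n → Fin n → ℝ) : Prop :=
  ∀ σ : Equiv.Perm (Fin n), ∀ P : RP n, ∀ i, f P i = f (P.relabel σ) (σ i)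

/-- Independence of irrelevant matches (IIM). -/
def IIM {n : ℕ} (f : RP n → Fin n → ℝ) : Prop :=
  ∀ P Q : RP n, ∀ i j k l : Fin n,
    i ≠ k → i ≠ l → j ≠ k → j ≠ l → i ≠ j → k ≠ l →
    (∀ a b, ¬((a = k ∧ b = l) ∨ (a = l ∧ b = k)) → P.R a b = Q.R a b ∧ P.M a b = Q.M a b) →
    f P i ≥ f P j → f Q i ≥ f Q j

/-- A decomposition of a ranking problem into per-match results:
match `t` between `a` and `b` (for `t < M a b`) has result `res a b t ∈ [-1,1]`,
and the results sum to `R a b`. -/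
structure RP.Decomp {n : ℕ} (P : RP n) where
  res : Fin n → Fin n → ℕ → ℝ
  skew : ∀ a b t, res b a t = - res a b t
  bound : ∀ a b t, t < P.M a b → |res a b t| ≤ 1
  sum : ∀ a b, ∑ t ∈ Finset.range (P.M a b), res a b t = P.R a b

/-- The opponent multiset of player `i`: `M i k` copies of each `k`. -/
def RP.Matches {n : ℕ} (P : RP n) (i : Fin n) := Σ k : Fin n, Fin (P.M i k)

/-- Self-consistency (SC): if there is a bijection between the opponent
multisets of `i` and `j` matching each match of `i` to a match of `j` with a
weakly smaller per-match result against a weakly weaker opponent, then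
`f i ≥ f j`, strictly if some comparison is strict. -/
def SC {n : ℕ} (f : RP n → Fin n → ℝ) : Prop :=
  ∀ P : RP n, ∀ d : P.Decomp, ∀ i j : Fin n, ∀ e : P.Matches i ≃ P.Matches j,
    (∀ m : P.Matches i,
      d.res i m.1 m.2.1 ≥ d.res j (e m).1 (e m).2.1 ∧ f P m.1 ≥ f P (e m).1) →
    f P i ≥ f P j ∧
    ((∃ m : P.Matches i,
        d.res i m.1 m.2.1 > d.res j (e m).1 (e m).2.1 ∨ f P m.1 > f P (e m).1) →
      f P i > f P j)


theorem sym_sop_implies_inv {n : ℕ} (f : RP n → Fin n → ℝ)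
    (hSym : SYM f) (hSOP : SOP f) : INV f := by
  intro P i j
  have hzero : ∀ a b, (P.add P.neg).R a b = 0 := by
    intro a b; simp [RP.add, RP.neg]
  have heq : f (P.add P.neg) i = f (P.add P.neg) j := hSym _ hzero i j
  constructor
  · intro hP
    by_contra h
    push_neg at h
    have := (hSOP P P.neg i j hP (le_of_lt h)).2 (Or.inr h)
    exact absurd heq (ne_of_gt this)
  · intro hN
    by_contra h
    push_neg at h
    have := (hSOP P P.neg j i (le_of_lt h) hN).2 (Or.inl h)
    exact absurd heq.symm (ne_of_gt this)
end

section
/- Any scoring method satisfying neutrality (NEU), symmetry (SYM), and strong order preservation (SOP) also satisfies independence of irrelevant matches (IIM). -/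
open Finset

/-- The `{k,l}`-restricted part of a ranking problem. -/
def pairR {n : ℕ} (P : RP n) (k l : Fin n) : RP n where
  R a b := if (a = k ∧ b = l) ∨ (a = l ∧ b = k) then P.R a b else 0
  M a b := if (a = k ∧ b = l) ∨ (a = l ∧ b = k) then P.M a b else 0
  skew a b := by
    have hc : ((b = k ∧ a = l) ∨ (b = l ∧ a = k)) ↔ ((a = k ∧ b = l) ∨ (a = l ∧ b = k)) := by
      tauto
    by_cases h : (a = k ∧ b = l) ∨ (a = l ∧ b = k) <;>
      simp [h, hc, P.skew a b]
  symm a b := by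
    have hc : ((b = k ∧ a = l) ∨ (b = l ∧ a = k)) ↔ ((a = k ∧ b = l) ∨ (a = l ∧ b = k)) := by
      tauto
    by_cases h : (a = k ∧ b = l) ∨ (a = l ∧ b = k) <;>
      simp [h, hc, P.symm a b]
  bound a b := by
    by_cases h : (a = k ∧ b = l) ∨ (a = l ∧ b = k) <;>
      simp [h, P.bound a b]

lemma RP.ext' {n : ℕ} {P Q : RP n} (hR : P.R = Q.R) (hM : P.M = Q.M) : P = Q := by
  cases P; cases Q; simp_all

theorem neu_sym_sop_implies_iim {n : ℕ} (hn : 4 ≤ n) (f : RP n → Fin n → ℝ)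
    (hNeu : NEU f) (hSym : SYM f) (hSOP : SOP f) : IIM f := by
  intro P Q i j k l hik hil hjk hjl hij hkl hagree hPij
  set D := pairR Q k l with hD
  set D' := pairR P k l with hD'
  -- the two augmented problems coincide
  have hE : P.add D = Q.add D' := by
    refine RP.ext' ?_ ?_ <;> funext a b
    · by_cases h : (a = k ∧ b = l) ∨ (a = l ∧ b = k)
      · show P.R a b + _ = Q.R a b + _
        simp only [hD, hD', pairR, if_pos h]
        ring
      · show P.R a b + _ = Q.R a b + _
        simp only [hD, hD', pairR, if_neg h]
        rw [(hagree a b h).1]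
    · by_cases h : (a = k ∧ b = l) ∨ (a = l ∧ b = k)
      · show P.M a b + _ = Q.M a b + _
        simp only [hD, hD', pairR, if_pos h]
        omega
      · show P.M a b + _ = Q.M a b + _
        simp only [hD, hD', pairR, if_neg h]
        rw [(hagree a b h).2]
  -- i and j are symmetric in any pair-restricted problem
  have key : ∀ S : RP n, f (pairR S k l) i = f (pairR S k l) j := by
    intro S
    set τ : Equiv.Perm (Fin n) := Equiv.swap i j with hτ
    have hτk : ∀ a, τ a = k ↔ a = k := by
      intro a
      constructor
      · intro h; have := congrArg τ h
        rwa [Equiv.swap_apply_self, Equiv.swap_apply_of_ne_of_ne hik.symm hjk.symm] at this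
      · rintro rfl; exact Equiv.swap_apply_of_ne_of_ne hik.symm hjk.symm
    have hτl : ∀ a, τ a = l ↔ a = l := by
      intro a
      constructor
      · intro h; have := congrArg τ h
        rwa [Equiv.swap_apply_self, Equiv.swap_apply_of_ne_of_ne hil.symm hjl.symm] at this
      · rintro rfl; exact Equiv.swap_apply_of_ne_of_ne hil.symm hjl.symm
    have tk : τ k = k := (hτk k).2 rfl
    have tl : τ l = l := (hτl l).2 rfl
    have hfix : (pairR S k l).relabel τ = pairR S k l := by
      refine RP.ext' ?_ ?_ <;> funext a b <;>
      · simp only [RP.relabel, pairR]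
        rw [Equiv.symm_swap]
        by_cases h : (a = k ∧ b = l) ∨ (a = l ∧ b = k)
        · rcases h with ⟨ha, hb⟩ | ⟨ha, hb⟩ <;> subst ha <;> subst hb <;> simp [← hτ, tk, tl]
        · rw [if_neg, if_neg h]
          simp only [← hτ, hτk, hτl]
          exact h
    have := hNeu τ (pairR S k l) i
    rw [hfix] at this
    rw [this, hτ, Equiv.swap_apply_left]
  by_contra hQ
  push_neg at hQ
  have h1 := (hSOP P D i j hPij (le_of_eq (key Q).symm)).1
  have h2 := (hSOP Q D' j i (le_of_lt hQ) (le_of_eq (key P))).2 (Or.inl hQ)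
  rw [hE] at h1
  exact absurd h1 (not_le.mpr h2)
end

section
/- The scoring method f defined by f_i(R,M) = Σ_j r_{i-1,j} for i ≥ 2 and f_1(R,M) = Σ_j r_{n,j} (the sum of results of the 'previous' player, cyclically) satisfies symmetry (SYM) and strong order preservation (SOP), but violates neutrality (NEU) and independence of irrelevant matches (IIM). -/
open Finset

/-- The sum of the results of the (cyclically) previous player. -/
noncomputable def prevSum (n : ℕ) [NeZero n] : RP n → Fin n → ℝ :=
  fun P i => ∑ j, P.R (i - 1) j

/-- A ranking problem with a single match between `x` and `y` of result `c`. -/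
def RP.single {n : ℕ} (x y : Fin n) (hxy : x ≠ y) (c : ℝ) (hc : |c| ≤ 1) : RP n where
  R a b := if a = x ∧ b = y then c else if a = y ∧ b = x then -c else 0
  M a b := if (a = x ∧ b = y) ∨ (a = y ∧ b = x) then 1 else 0
  skew a b := by
    rcases eq_or_ne a x with h1 | h1 <;> rcases eq_or_ne a y with h2 | h2 <;>
      rcases eq_or_ne b x with h3 | h3 <;> rcases eq_or_ne b y with h4 | h4 <;> simp_all
  symm a b := by
    rcases eq_or_ne a x with h1 | h1 <;> rcases eq_or_ne a y with h2 | h2 <;>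
      rcases eq_or_ne b x with h3 | h3 <;> rcases eq_or_ne b y with h4 | h4 <;> simp_all
  bound a b := by
    rcases eq_or_ne a x with h1 | h1 <;> rcases eq_or_ne a y with h2 | h2 <;>
      rcases eq_or_ne b x with h3 | h3 <;> rcases eq_or_ne b y with h4 | h4 <;>
      simp_all [abs_nonneg]

lemma single_row_x {n : ℕ} (x y : Fin n) (hxy : x ≠ y) (c : ℝ) (hc : |c| ≤ 1) :
    ∑ j, (RP.single x y hxy c hc).R x j = c := by
  simp [RP.single, hxy]

lemma single_row_y {n : ℕ} (x y : Fin n) (hxy : x ≠ y) (c : ℝ) (hc : |c| ≤ 1) :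
    ∑ j, (RP.single x y hxy c hc).R y j = -c := by
  simp [RP.single, hxy, Ne.symm hxy]

lemma single_row_other {n : ℕ} (x y : Fin n) (hxy : x ≠ y) (c : ℝ) (hc : |c| ≤ 1)
    (z : Fin n) (hzx : z ≠ x) (hzy : z ≠ y) :
    ∑ j, (RP.single x y hxy c hc).R z j = 0 := by
  simp [RP.single, hzx, hzy]

theorem prevSum_axioms (n : ℕ) [NeZero n] (hn : 4 ≤ n) :
    SYM (prevSum n) ∧ SOP (prevSum n) ∧ ¬ NEU (prevSum n) ∧ ¬ IIM (prevSum n) := by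
  have hadd : ∀ P Q : RP n, ∀ i, prevSum n (P.add Q) i = prevSum n P i + prevSum n Q i := by
    intro P Q i
    simp [prevSum, RP.add, Finset.sum_add_distrib]
  -- useful Fin elements
  have h0 : (0 : ℕ) < n := by omega
  have h1 : (1 : ℕ) < n := by omega
  have h2 : (2 : ℕ) < n := by omega
  have h3 : (3 : ℕ) < n := by omega
  set a : Fin n := ⟨0, h0⟩ with ha
  set b : Fin n := ⟨1, h1⟩ with hb
  set c2 : Fin n := ⟨2, h2⟩ with hc2
  set d3 : Fin n := ⟨3, h3⟩ with hd3
  have hab : a ≠ b := by simp [ha, hb, Fin.ext_iff]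
  have hac : a ≠ c2 := by simp [ha, hc2, Fin.ext_iff]
  have hbc : b ≠ c2 := by simp [hb, hc2, Fin.ext_iff]
  have hval1 : ((1 : Fin n) : ℕ) = 1 := by
    rw [Fin.val_one']; exact Nat.mod_eq_of_lt h1
  have hsucc : ∀ m : ℕ, (hm : m + 1 < n) → (⟨m, by omega⟩ : Fin n) + 1 = ⟨m + 1, hm⟩ := by
    intro m hm
    apply Fin.ext
    simp [Fin.add_def, Fin.val_one', Nat.mod_eq_of_lt h1, Nat.mod_eq_of_lt hm]
  have hasub : ∀ r : Fin n, (r + 1) - 1 = r := by intro r; exact add_sub_cancel_right r 1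
  refine ⟨?_, ?_, ?_, ?_⟩
  · -- SYM
    intro P hP i j
    simp [prevSum, hP]
  · -- SOP
    intro P Q i j hP hQ
    rw [hadd, hadd]
    constructor
    · linarith
    · rintro (h | h) <;> linarith
  · -- ¬ NEU
    intro hneu
    set P := RP.single a b hab 1 (by norm_num) with hPdef
    have hba : b = a + 1 := by
      rw [ha, hsucc 0 h1]
    have hcb : c2 = b + 1 := by
      rw [hb, hsucc 1 h2]
    have key := hneu (Equiv.swap b c2) P (a + 1)
    have hfP : prevSum n P (a + 1) = 1 := by
      rw [prevSum, hasub]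
      exact single_row_x a b hab 1 (by norm_num)
    have hσ : Equiv.swap b c2 (a + 1) = c2 := by
      rw [← hba, Equiv.swap_apply_left]
    rw [hfP, hσ] at key
    have hfQ : prevSum n (P.relabel (Equiv.swap b c2)) c2 = 0 := by
      have hc2b : c2 - 1 = b := by rw [hcb]; exact hasub b
      rw [prevSum, hc2b]
      have hsymb : (Equiv.swap b c2).symm b = c2 := by
        rw [Equiv.symm_swap, Equiv.swap_apply_left]
      have : ∀ j, (P.relabel (Equiv.swap b c2)).R b j = P.R c2 ((Equiv.swap b c2).symm j) := by
        intro j; rw [RP.relabel]; dsimp only; rw [hsymb]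
      rw [Finset.sum_congr rfl fun j _ => this j]
      rw [Equiv.sum_comp ((Equiv.swap b c2).symm) (fun j => P.R c2 j)]
      exact single_row_other a b hab 1 (by norm_num) c2 (Ne.symm hac) (Ne.symm hbc)
    rw [hfQ] at key
    norm_num at key
  · -- ¬ IIM
    intro hiim
    set P := RP.single a c2 hac 1 (by norm_num) with hPdef
    set Q := RP.single a c2 hac (-1) (by norm_num) with hQdef
    have hi : (a + 1 : Fin n) = b := by rw [ha, hsucc 0 h1]
    have hj : (c2 + 1 : Fin n) = d3 := by rw [hc2, hsucc 2 h3]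
    have key := hiim P Q (a + 1) (c2 + 1) a c2
      (by rw [hi]; exact Ne.symm hab)
      (by rw [hi]; exact hbc)
      (by rw [hj]; simp [hd3, ha, Fin.ext_iff])
      (by rw [hj]; simp [hd3, hc2, Fin.ext_iff])
      (by rw [hi, hj]; simp [hb, hd3, Fin.ext_iff])
      hac
      (by
        intro x y hxy
        push_neg at hxy
        constructor
        · simp only [hPdef, hQdef, RP.single]
          by_cases h1' : x = a ∧ y = c2
          · exact absurd h1'.2 (hxy.1 h1'.1)
          · by_cases h2' : x = c2 ∧ y = a
            · exact absurd h2'.2 (hxy.2 h2'.1)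
            · simp [h1', h2']
        · simp [hPdef, hQdef, RP.single])
    have hfP1 : prevSum n P (a + 1) = 1 := by
      rw [prevSum, hasub]; exact single_row_x a c2 hac 1 (by norm_num)
    have hfP3 : prevSum n P (c2 + 1) = -1 := by
      rw [prevSum, hasub]; exact single_row_y a c2 hac 1 (by norm_num)
    have hfQ1 : prevSum n Q (a + 1) = -1 := by
      rw [prevSum, hasub]; exact single_row_x a c2 hac (-1) (by norm_num)
    have hfQ3 : prevSum n Q (c2 + 1) = 1 := by
      rw [prevSum, hasub]
      have := single_row_y a c2 hac (-1) (by norm_num)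
      rw [this]; norm_num
    have := key (by rw [hfP1, hfP3]; norm_num)
    rw [hfQ1, hfQ3] at this
    norm_num at this
end

section
/- The scoring method f defined by f_i(R,M) = Σ_{j: m_ij > 0 counted with multiplicity m_ij} Σ_k r_{jk} (the aggregated sum of results of the opponents, i.e., f_i(R,M) = Σ_j m_{ij} · (Σ_k r_{jk})) satisfies neutrality (NEU) and symmetry (SYM), but violates strong order preservation (SOP) and independence of irrelevant matches (IIM). -/
open Finset

/-- The aggregated sum of the results of the opponents:
`f_i = ∑_j m_{ij} · (∑_k r_{jk})`. -/
noncomputable def oppResultSum (n : ℕ) : RP n → Fin n → ℝ :=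
  fun P i => ∑ j, (P.M i j : ℝ) * ∑ k, P.R j k


/-- A single-match ranking problem: one match between `a` and `b` with result `r`. -/
def RPsingle {n : ℕ} (a b : Fin n) (hab : a ≠ b) (r : ℝ) (hr : |r| ≤ 1) : RP n where
  R i j := ((if i = a then (1:ℝ) else 0) * (if j = b then 1 else 0)
          - (if i = b then (1:ℝ) else 0) * (if j = a then 1 else 0)) * r
  M i j := (if i = a then 1 else 0) * (if j = b then 1 else 0)
         + (if i = b then 1 else 0) * (if j = a then 1 else 0)
  skew i j := by ring
  symm i j := by ring
  bound i j := by
    split_ifs <;> simp_all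

lemma rowSum_single {n : ℕ} (a b : Fin n) (hab : a ≠ b) (r : ℝ) (hr : |r| ≤ 1) (j : Fin n) :
    ∑ k, (RPsingle a b hab r hr).R j k = ((if j = a then r else 0) - (if j = b then r else 0)) := by
  simp only [RPsingle]
  by_cases hja : j = a <;> by_cases hjb : j = b <;>
    simp_all [sub_mul, ite_mul, Finset.sum_sub_distrib, Finset.sum_ite_eq', hab.symm]

lemma castM_single {n : ℕ} (a b : Fin n) (hab : a ≠ b) (r : ℝ) (hr : |r| ≤ 1) (i j : Fin n) :
    (((RPsingle a b hab r hr).M i j : ℝ)) =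
      (if i = a then (1:ℝ) else 0) * (if j = b then 1 else 0)
    + (if i = b then (1:ℝ) else 0) * (if j = a then 1 else 0) := by
  simp only [RPsingle]
  push_cast
  rfl

lemma score_single {n : ℕ} (a b : Fin n) (hab : a ≠ b) (r : ℝ) (hr : |r| ≤ 1) (i : Fin n) :
    oppResultSum n (RPsingle a b hab r hr) i =
      (if i = b then r else 0) - (if i = a then r else 0) := by
  simp only [oppResultSum, rowSum_single, castM_single]
  by_cases hia : i = a <;> by_cases hib : i = b <;>
    simp_all [add_mul, ite_mul, mul_ite, Finset.sum_add_distrib, Finset.sum_sub_distrib,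
      Finset.sum_ite_eq', hab, hab.symm]

def sTot {n : ℕ} (a b c d : Fin n) (r r' : ℝ) (x : Fin n) : ℝ :=
  ((if x = a then r else 0) - (if x = b then r else 0))
  + ((if x = c then r' else 0) - (if x = d then r' else 0))

lemma score_add_single {n : ℕ} (a b : Fin n) (hab : a ≠ b) (r : ℝ) (hr : |r| ≤ 1)
    (c d : Fin n) (hcd : c ≠ d) (r' : ℝ) (hr' : |r'| ≤ 1) (i : Fin n) :
    oppResultSum n ((RPsingle a b hab r hr).add (RPsingle c d hcd r' hr')) i =
      (if i = a then 1 else 0) * sTot a b c d r r' b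
    + (if i = b then 1 else 0) * sTot a b c d r r' a
    + (if i = c then 1 else 0) * sTot a b c d r r' d
    + (if i = d then 1 else 0) * sTot a b c d r r' c := by
  have hM : ∀ j, (((RPsingle a b hab r hr).add (RPsingle c d hcd r' hr')).M i j : ℝ)
      = ((RPsingle a b hab r hr).M i j : ℝ) + ((RPsingle c d hcd r' hr').M i j : ℝ) := by
    intro j; simp [RP.add]
  have hR : ∀ j, (∑ k, ((RPsingle a b hab r hr).add (RPsingle c d hcd r' hr')).R j k)
      = sTot a b c d r r' j := by
    intro j
    simp only [RP.add, Finset.sum_add_distrib, rowSum_single, sTot]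
  have key : ∀ (u : Fin n) (g : Fin n → ℝ),
      (∑ j, (if j = u then (1:ℝ) else 0) * g j) = g u := by
    intro u g; simp [ite_mul, Finset.sum_ite_eq']
  simp only [oppResultSum, hM, hR, castM_single]
  calc ∑ j, (((if i = a then (1:ℝ) else 0) * (if j = b then 1 else 0)
          + (if i = b then (1:ℝ) else 0) * (if j = a then 1 else 0))
        + ((if i = c then (1:ℝ) else 0) * (if j = d then 1 else 0)
          + (if i = d then (1:ℝ) else 0) * (if j = c then 1 else 0))) * sTot a b c d r r' j
      = ∑ j, ((if i = a then (1:ℝ) else 0) * ((if j = b then (1:ℝ) else 0) * sTot a b c d r r' j)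
          + ((if i = b then (1:ℝ) else 0) * ((if j = a then (1:ℝ) else 0) * sTot a b c d r r' j)
          + ((if i = c then (1:ℝ) else 0) * ((if j = d then (1:ℝ) else 0) * sTot a b c d r r' j)
          + (if i = d then (1:ℝ) else 0) * ((if j = c then (1:ℝ) else 0) * sTot a b c d r r' j)))) :=
        Finset.sum_congr rfl (fun j _ => by ring)
    _ = _ := by
        rw [Finset.sum_add_distrib, Finset.sum_add_distrib, Finset.sum_add_distrib,
          ← Finset.mul_sum, ← Finset.mul_sum, ← Finset.mul_sum, ← Finset.mul_sum,
          key, key, key, key]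
        ring

set_option maxHeartbeats 1600000 in
theorem oppResultSum_axioms (n : ℕ) (hn : 4 ≤ n) :
    NEU (oppResultSum n) ∧ SYM (oppResultSum n) ∧
      ¬ SOP (oppResultSum n) ∧ ¬ IIM (oppResultSum n) := by
  set e0 : Fin n := ⟨0, by omega⟩ with he0
  set e1 : Fin n := ⟨1, by omega⟩ with he1
  set e2 : Fin n := ⟨2, by omega⟩ with he2
  set e3 : Fin n := ⟨3, by omega⟩ with he3
  have h01 : e0 ≠ e1 := by simp [he0, he1, Fin.ext_iff]
  have h02 : e0 ≠ e2 := by simp [he0, he2, Fin.ext_iff]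
  have h03 : e0 ≠ e3 := by simp [he0, he3, Fin.ext_iff]
  have h12 : e1 ≠ e2 := by simp [he1, he2, Fin.ext_iff]
  have h13 : e1 ≠ e3 := by simp [he1, he3, Fin.ext_iff]
  have h23 : e2 ≠ e3 := by simp [he2, he3, Fin.ext_iff]
  refine ⟨?_, ?_, ?_, ?_⟩
  · -- NEU
    intro σ P i
    have h1 : ∀ j, (∑ k, P.R j (σ.symm k)) = ∑ k, P.R j k :=
      fun j => Equiv.sum_comp σ.symm (P.R j)
    simp only [oppResultSum, RP.relabel, Equiv.symm_apply_apply, h1]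
    exact (Equiv.sum_comp σ.symm (fun j => (P.M i j : ℝ) * ∑ k, P.R j k)).symm
  · -- SYM
    intro P h i j
    simp [oppResultSum, h]
  · -- ¬ SOP
    intro h
    have h1 : |(0:ℝ)| ≤ 1 := by norm_num
    have h2 : |(1:ℝ)| ≤ 1 := by norm_num
    set P := RPsingle e1 e2 h12 0 h1 with hP
    set Q := RPsingle e2 e3 h23 1 h2 with hQ
    have hfP : ∀ i, oppResultSum n P i = 0 := by
      intro i; rw [hP, score_single]; simp
    have hfQ0 : oppResultSum n Q e0 = 0 := by
      rw [hQ, score_single]; simp [h02, h03]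
    have hfQ1 : oppResultSum n Q e1 = 0 := by
      rw [hQ, score_single]; simp [h12, h13]
    obtain ⟨hge, -⟩ := h P Q e0 e1 (by rw [hfP, hfP]) (by rw [hfQ0, hfQ1])
    have hs0 : oppResultSum n (P.add Q) e0 = 0 := by
      rw [hP, hQ, score_add_single]
      simp [h01, h02, h03]
    have hs1 : oppResultSum n (P.add Q) e1 = 1 := by
      rw [hP, hQ, score_add_single]
      simp [h12, h13, sTot, h12.symm, h23]
    rw [hs0, hs1] at hge
    linarith
  · -- ¬ IIM
    intro h
    have h1 : |(0:ℝ)| ≤ 1 := by norm_num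
    have h2 : |(1:ℝ)| ≤ 1 := by norm_num
    have h3 : |(-1:ℝ)| ≤ 1 := by norm_num
    set P := (RPsingle e0 e2 h02 0 h1).add (RPsingle e2 e3 h23 1 h2) with hP
    set Q := (RPsingle e0 e2 h02 0 h1).add (RPsingle e2 e3 h23 (-1) h3) with hQ
    have hfP0 : oppResultSum n P e0 = 1 := by
      rw [hP, score_add_single]
      simp [h02, h03, sTot, h02.symm, h23, h12.symm]
    have hfP1 : oppResultSum n P e1 = 0 := by
      rw [hP, score_add_single]
      simp [h01.symm, h12, h13]
    have hfQ0 : oppResultSum n Q e0 = -1 := by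
      rw [hQ, score_add_single]
      simp [h02, h03, sTot, h02.symm, h23]
    have hfQ1 : oppResultSum n Q e1 = 0 := by
      rw [hQ, score_add_single]
      simp [h01.symm, h12, h13]
    have := h P Q e0 e1 e2 e3 h02 h03 h12 h13 h01 h23 ?_ ?_
    · rw [hfQ0, hfQ1] at this; linarith
    · intro a b hnab
      refine ⟨?_, rfl⟩
      simp only [hP, hQ, RP.add, RPsingle]
      by_cases g1 : a = e2 <;> by_cases g2 : b = e3 <;>
        by_cases g3 : a = e3 <;> by_cases g4 : b = e2 <;> simp_all
    · rw [hfP0, hfP1]; norm_num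
end

section
/- There exists no scoring method on ranking problems with 4 players that satisfies both order preservation (OP) and self-consistency (SC). -/
open Finset

/-! ### Auxiliary constructions for the impossibility proof -/

/-- First counterexample problem: player 1 beats player 0; the pairs
(0,3), (1,2), (2,3) are draws (one match each, along the 4-cycle 0-1-2-3-0). -/
def Pex : RP 4 where
  R := ![![0,-1,0,0], ![1,0,0,0], ![0,0,0,0], ![0,0,0,0]]
  M := ![![0,1,0,1], ![1,0,1,0], ![0,1,0,1], ![1,0,1,0]]
  skew := by intro i j; fin_cases i <;> fin_cases j <;> norm_num
  symm := by decide
  bound := by intro i j; fin_cases i <;> fin_cases j <;> norm_num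

/-- Second counterexample problem: all draws along the 4-cycle 0-1-3-2-0. -/
def Qex : RP 4 where
  R := fun _ _ => 0
  M := ![![0,1,1,0], ![1,0,0,1], ![1,0,0,1], ![0,1,1,0]]
  skew := by intro i j; simp
  symm := by decide
  bound := by intro i j; simp

/-- A decomposition for a problem in which every pair plays at most one match. -/
def simpleDecomp (P : RP 4) (h : ∀ a b, P.M a b ≤ 1) : P.Decomp where
  res a b _ := P.R a b
  skew a b _ := P.skew a b
  bound a b t _ := le_trans (P.bound a b) (by exact_mod_cast h a b)
  sum a b := by
    rcases Nat.le_one_iff_eq_zero_or_eq_one.mp (h a b) with h0 | h1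
    · rw [h0, Finset.sum_range_zero]
      have hb := P.bound a b
      rw [h0] at hb
      have h0' : |P.R a b| ≤ 0 := by simpa using hb
      simpa using (abs_nonpos_iff.mp h0').symm
    · rw [h1, Finset.sum_range_one]

def dP : Pex.Decomp := simpleDecomp Pex (by decide)
def dQ : Qex.Decomp := simpleDecomp Qex (by decide)

/-- First-match results for the sum problem `Pex.add Qex`. -/
def Amat : Fin 4 → Fin 4 → ℝ := ![![0,-1,0,0], ![1,0,0,0], ![0,0,0,-1], ![0,0,1,0]]
/-- Second-match results for the sum problem `Pex.add Qex`. -/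
def Bmat : Fin 4 → Fin 4 → ℝ := ![![0,0,0,0], ![0,0,0,0], ![0,0,0,1], ![0,0,-1,0]]

/-- A decomposition for the sum problem in which the two matches between
players 2 and 3 are decomposed as one win and one loss. -/
def dS : (Pex.add Qex).Decomp where
  res a b t := if t = 0 then Amat a b else Bmat a b
  skew a b t := by
    split <;> (fin_cases a <;> fin_cases b <;> norm_num [Amat, Bmat])
  bound a b t _ := by
    split <;> (fin_cases a <;> fin_cases b <;> norm_num [Amat, Bmat])
  sum a b := by
    have hM : ∀ x y : Fin 4, (Pex.add Qex).M x y = Pex.M x y + Qex.M x y := fun _ _ => rfl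
    have hR : ∀ x y : Fin 4, (Pex.add Qex).R x y = Pex.R x y + Qex.R x y := fun _ _ => rfl
    rw [hM, hR]
    fin_cases a <;> fin_cases b <;>
      norm_num [Pex, Qex, Amat, Bmat, Finset.sum_range_succ]

/-- A "block" bijection between the opponent multisets of `i` and `j`,
induced by a permutation `s` of the players (reversing the order of the
copies within each block). -/
def blockEquiv (P : RP 4) (i j : Fin 4) (s : Equiv.Perm (Fin 4))
    (h : ∀ k, P.M i k = P.M j (s k)) : P.Matches i ≃ P.Matches j where
  toFun m := ⟨s m.1, ⟨P.M j (s m.1) - 1 - m.2.1, by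
    have h1 := m.2.2; have h2 := h m.1; omega⟩⟩
  invFun m := ⟨s.symm m.1, ⟨P.M i (s.symm m.1) - 1 - m.2.1, by
    have h1 := m.2.2
    have h2 := h (s.symm m.1)
    rw [Equiv.apply_symm_apply] at h2
    omega⟩⟩
  left_inv := by
    rintro ⟨k, t⟩
    have h1 : s.symm (s k) = k := s.symm_apply_apply k
    dsimp only
    refine Sigma.ext (by exact h1) ((Fin.heq_ext_iff (congrArg (P.M i) h1)).mpr ?_)
    dsimp only
    have ht := t.2
    have h2 := h k
    rw [h1]
    omega
  right_inv := by
    rintro ⟨k, t⟩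
    have h1 : s (s.symm k) = k := s.apply_symm_apply k
    dsimp only
    refine Sigma.ext (by exact h1) ((Fin.heq_ext_iff (congrArg (P.M j) h1)).mpr ?_)
    dsimp only
    have ht := t.2
    have h2 := h (s.symm k)
    rw [h1] at h2 ⊢
    omega

lemma blockEquiv_fst (P : RP 4) (i j : Fin 4) (s : Equiv.Perm (Fin 4))
    (h : ∀ k, P.M i k = P.M j (s k)) (m : Σ k : Fin 4, Fin (P.M i k)) :
    (blockEquiv P i j s h m).1 = s m.1 := rfl

lemma blockEquiv_snd (P : RP 4) (i j : Fin 4) (s : Equiv.Perm (Fin 4))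
    (h : ∀ k, P.M i k = P.M j (s k)) (m : Σ k : Fin 4, Fin (P.M i k)) :
    (blockEquiv P i j s h m).2.1 = P.M j (s m.1) - 1 - m.2.1 := rfl

/-- `Fin 4` anonymous constructor normalization lemmas. -/
lemma finmk0 (h : (0:ℕ) < 4) : (⟨0, h⟩ : Fin 4) = 0 := rfl
lemma finmk1 (h : (1:ℕ) < 4) : (⟨1, h⟩ : Fin 4) = 1 := rfl
lemma finmk2 (h : (2:ℕ) < 4) : (⟨2, h⟩ : Fin 4) = 2 := rfl
lemma finmk3 (h : (3:ℕ) < 4) : (⟨3, h⟩ : Fin 4) = 3 := rfl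

theorem no_op_and_sc : ¬ ∃ f : RP 4 → Fin 4 → ℝ, OP f ∧ SC f := by
  rintro ⟨f, hOP, hSC⟩
  -- In `Pex`, player 1 beats player 3's record pointwise: f 1 > f 3.
  have hP13 : f Pex 1 > f Pex 3 := by
    refine (hSC Pex dP 1 3 (blockEquiv Pex 1 3 (Equiv.refl _) (fun k => by fin_cases k <;> rfl)) ?_).2
      ⟨⟨0, ⟨0, by decide⟩⟩, Or.inl ?_⟩
    · rintro ⟨k, t⟩
      simp only [blockEquiv_fst, blockEquiv_snd, Equiv.refl_apply]
      fin_cases k <;> fin_cases t <;>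
        simp only [finmk0, finmk1, finmk2, finmk3] <;>
        exact ⟨by simp [dP, simpleDecomp, Pex, Matrix.vecHead, Matrix.vecTail], le_refl _⟩
    · simp only [blockEquiv_fst, blockEquiv_snd, Equiv.refl_apply]
      simp [dP, simpleDecomp, Pex, Matrix.vecHead, Matrix.vecTail]
  -- In `Pex`, player 2 beats player 0's record pointwise: f 2 > f 0.
  have hP20 : f Pex 2 > f Pex 0 := by
    refine (hSC Pex dP 2 0 (blockEquiv Pex 2 0 (Equiv.refl _) (fun k => by fin_cases k <;> rfl)) ?_).2
      ⟨⟨1, ⟨0, by decide⟩⟩, Or.inl ?_⟩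
    · rintro ⟨k, t⟩
      simp only [blockEquiv_fst, blockEquiv_snd, Equiv.refl_apply]
      fin_cases k <;> fin_cases t <;>
        simp only [finmk0, finmk1, finmk2, finmk3] <;>
        exact ⟨by simp [dP, simpleDecomp, Pex, Matrix.vecHead, Matrix.vecTail], le_refl _⟩
    · simp only [blockEquiv_fst, blockEquiv_snd, Equiv.refl_apply]
      simp [dP, simpleDecomp, Pex, Matrix.vecHead, Matrix.vecTail]
  -- In `Pex` : f 2 > f 3.
  have hP23 : f Pex 2 > f Pex 3 := by
    by_contra hc
    push_neg at hc
    have e1 : ((Equiv.swap (0:Fin 4) 1).trans (Equiv.swap 2 3)) 1 = 0 := by decide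
    have e3 : ((Equiv.swap (0:Fin 4) 1).trans (Equiv.swap 2 3)) 3 = 2 := by decide
    have h23 : f Pex 2 > f Pex 3 := by
      refine (hSC Pex dP 2 3
        (blockEquiv Pex 2 3 ((Equiv.swap (0:Fin 4) 1).trans (Equiv.swap 2 3)) (fun k => by fin_cases k <;> rfl)) ?_).2
        ⟨⟨1, ⟨0, by decide⟩⟩, Or.inr ?_⟩
      · rintro ⟨k, t⟩
        simp only [blockEquiv_fst, blockEquiv_snd]
        fin_cases k <;> fin_cases t <;> simp only [finmk0, finmk1, finmk2, finmk3]
        · rw [e1]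
          exact ⟨by simp [dP, simpleDecomp, Pex, Matrix.vecHead, Matrix.vecTail], by linarith⟩
        · rw [e3]
          exact ⟨by simp [dP, simpleDecomp, Pex, Matrix.vecHead, Matrix.vecTail], hc⟩
      · simp only [blockEquiv_fst]
        rw [e1]
        linarith
    linarith
  -- In `Qex` : f 0 ≥ f 3 and f 2 ≥ f 1 (identical all-draw records).
  have hQ03 : f Qex 0 ≥ f Qex 3 := by
    refine (hSC Qex dQ 0 3 (blockEquiv Qex 0 3 (Equiv.refl _) (fun k => by fin_cases k <;> rfl)) ?_).1
    rintro ⟨k, t⟩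
    simp only [blockEquiv_fst, blockEquiv_snd, Equiv.refl_apply]
    fin_cases k <;> fin_cases t <;> simp only [finmk0, finmk1, finmk2, finmk3] <;>
      exact ⟨le_refl _, le_refl _⟩
  have hQ21 : f Qex 2 ≥ f Qex 1 := by
    refine (hSC Qex dQ 2 1 (blockEquiv Qex 2 1 (Equiv.refl _) (fun k => by fin_cases k <;> rfl)) ?_).1
    rintro ⟨k, t⟩
    simp only [blockEquiv_fst, blockEquiv_snd, Equiv.refl_apply]
    fin_cases k <;> fin_cases t <;> simp only [finmk0, finmk1, finmk2, finmk3] <;>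
      exact ⟨le_refl _, le_refl _⟩
  -- In `Qex` : f 2 ≥ f 3.
  have hQ23 : f Qex 2 ≥ f Qex 3 := by
    by_contra hc
    push_neg at hc
    have e0 : ((Equiv.swap (0:Fin 4) 1).trans (Equiv.swap 2 3)) 0 = 1 := by decide
    have e3 : ((Equiv.swap (0:Fin 4) 1).trans (Equiv.swap 2 3)) 3 = 2 := by decide
    have h23 : f Qex 2 > f Qex 3 := by
      refine (hSC Qex dQ 2 3
        (blockEquiv Qex 2 3 ((Equiv.swap (0:Fin 4) 1).trans (Equiv.swap 2 3)) (fun k => by fin_cases k <;> rfl)) ?_).2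
        ⟨⟨0, ⟨0, by decide⟩⟩, Or.inr ?_⟩
      · rintro ⟨k, t⟩
        simp only [blockEquiv_fst, blockEquiv_snd]
        fin_cases k <;> fin_cases t <;> simp only [finmk0, finmk1, finmk2, finmk3]
        · rw [e0]
          exact ⟨le_refl _, by linarith⟩
        · rw [e3]
          exact ⟨le_refl _, hc.le⟩
      · simp only [blockEquiv_fst]
        rw [e0]
        linarith
    linarith
  -- Order preservation forces f 2 > f 3 in the sum.
  have hbalP : RPBalanced Pex 2 := by intro i; fin_cases i <;> decide
  have hbalQ : RPBalanced Qex 2 := by intro i; fin_cases i <;> decide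
  have hOPc : f (Pex.add Qex) 2 > f (Pex.add Qex) 3 :=
    (hOP Pex Qex 2 2 hbalP hbalQ 2 3 hP23.le hQ23).2 (Or.inl hP23)
  -- But self-consistency on the sum then forces f 3 > f 2.
  have hMadd : ∀ a b : Fin 4, (Pex.add Qex).M a b = Pex.M a b + Qex.M a b := fun _ _ => rfl
  have eS0 : (Equiv.swap (2:Fin 4) 3) 0 = 0 := by decide
  have eS1 : (Equiv.swap (2:Fin 4) 3) 1 = 1 := by decide
  have eS2 : (Equiv.swap (2:Fin 4) 3) 2 = 3 := by decide
  have hS : f (Pex.add Qex) 3 > f (Pex.add Qex) 2 := by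
    refine (hSC (Pex.add Qex) dS 3 2
      (blockEquiv (Pex.add Qex) 3 2 (Equiv.swap (2:Fin 4) 3) (fun k => by fin_cases k <;> rfl)) ?_).2
      ⟨⟨2, ⟨0, by decide⟩⟩, Or.inr ?_⟩
    · rintro ⟨k, t⟩
      simp only [blockEquiv_fst, blockEquiv_snd]
      fin_cases k <;> fin_cases t <;> simp only [finmk0, finmk1, finmk2, finmk3]
      · rw [eS0, show (Pex.add Qex).M 2 0 = 1 from by decide]
        exact ⟨by simp [dS, Amat, Bmat, hMadd, Pex, Qex, Matrix.vecHead, Matrix.vecTail],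
          le_refl _⟩
      · rw [eS1, show (Pex.add Qex).M 2 1 = 1 from by decide]
        exact ⟨by simp [dS, Amat, Bmat, hMadd, Pex, Qex, Matrix.vecHead, Matrix.vecTail],
          le_refl _⟩
      · rw [eS2, show (Pex.add Qex).M 2 3 = 2 from by decide]
        exact ⟨by simp [dS, Amat, Bmat, Matrix.vecHead, Matrix.vecTail], hOPc.le⟩
      · rw [eS2, show (Pex.add Qex).M 2 3 = 2 from by decide]
        exact ⟨by simp [dS, Amat, Bmat, Matrix.vecHead, Matrix.vecTail], hOPc.le⟩
    · simp only [blockEquiv_fst]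
      rw [eS2]
      exact hOPc
  linarith
end

section
/- Let (R',M') be the 4-player ranking problem where X_3 defeated X_1, X_3 defeated X_2, X_1 drew with X_4, and X_2 drew with X_4 (one match each). Any self-consistent scoring method f satisfies f_1(R',M') = f_2(R',M') and f_3(R',M') > f_4(R',M'). -/
open Finset

/-- X₃ beat X₁ and X₂; X₄ drew with X₁ and X₂ (one match each). -/
def P11 : RP 4 where
  R := fun i j => ![![0,0,-1,0],![0,0,-1,0],![1,1,0,0],![0,0,0,0]] i j
  M := fun i j => ![![0,0,1,1],![0,0,1,1],![1,1,0,0],![1,1,0,0]] i j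
  skew := by intro i j; fin_cases i <;> fin_cases j <;> norm_num
  symm := by decide
  bound := by intro i j; fin_cases i <;> fin_cases j <;> norm_num

/-- Per-match decomposition of `P11`: since every pair plays at most once,
each match result is just the corresponding entry of `R`. -/
def d11 : P11.Decomp where
  res a b _ := P11.R a b
  skew a b t := P11.skew a b
  bound a b t _ := by fin_cases a <;> fin_cases b <;> norm_num [P11]
  sum a b := by fin_cases a <;> fin_cases b <;> simp [P11, Matrix.vecHead, Matrix.vecTail]

def e01 : P11.Matches 0 ≃ P11.Matches 1 :=
  Equiv.sigmaCongrRight (fun k => finCongr (by fin_cases k <;> rfl))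

def e23 : P11.Matches 2 ≃ P11.Matches 3 :=
  Equiv.sigmaCongrRight (fun k => finCongr (by fin_cases k <;> rfl))

theorem sc_on_P11 (f : RP 4 → Fin 4 → ℝ) (hSC : SC f) :
    f P11 0 = f P11 1 ∧ f P11 2 > f P11 3 := by
  have h01 : ∀ m : P11.Matches 0,
      d11.res 0 m.1 m.2.1 ≥ d11.res 1 (e01 m).1 (e01 m).2.1 ∧
      f P11 m.1 ≥ f P11 (e01 m).1 := by
    rintro ⟨k, t⟩
    fin_cases k
    · exact t.elim0
    · exact t.elim0
    · exact ⟨le_refl _, le_refl _⟩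
    · exact ⟨le_refl _, le_refl _⟩
  have h10 : ∀ m : P11.Matches 1,
      d11.res 1 m.1 m.2.1 ≥ d11.res 0 (e01.symm m).1 (e01.symm m).2.1 ∧
      f P11 m.1 ≥ f P11 (e01.symm m).1 := by
    rintro ⟨k, t⟩
    fin_cases k
    · exact t.elim0
    · exact t.elim0
    · exact ⟨le_refl _, le_refl _⟩
    · exact ⟨le_refl _, le_refl _⟩
  have H1 := (hSC P11 d11 0 1 e01 h01).1
  have H2 := (hSC P11 d11 1 0 e01.symm h10).1
  have h23 : ∀ m : P11.Matches 2,
      d11.res 2 m.1 m.2.1 ≥ d11.res 3 (e23 m).1 (e23 m).2.1 ∧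
      f P11 m.1 ≥ f P11 (e23 m).1 := by
    rintro ⟨k, t⟩
    fin_cases k
    · exact ⟨show (1:ℝ) ≥ 0 by norm_num, le_refl _⟩
    · exact ⟨show (1:ℝ) ≥ 0 by norm_num, le_refl _⟩
    · exact t.elim0
    · exact t.elim0
  have H3 := (hSC P11 d11 2 3 e23 h23).2
  refine ⟨le_antisymm H2 H1, H3 ⟨(⟨0, ⟨0, by decide⟩⟩ : P11.Matches 2), Or.inl (by unfold e23; show (1:ℝ) > 0; norm_num)⟩⟩
end

section
/- There exists a self-consistent scoring method on 4-player ranking problems that is neither neutral nor symmetric. Concretely, on the ranking problem where X_1–X_2, X_2–X_3, X_3–X_4 are single drawn matches (a path of draws), the assignment f_i = 4 − i is consistent with self-consistency, yet neutrality would force f_1 = f_4 and f_2 = f_3, and symmetry would force all scores equal. -/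
open Finset

/-! ### Auxiliary construction -/

namespace SCAux

/-- The matches matrix of the path-of-draws problem: 0–1, 1–2, 2–3. -/
def M0 : Fin 4 → Fin 4 → ℕ := fun i j =>
  if (i = 0 ∧ j = 1) ∨ (i = 1 ∧ j = 0) ∨ (i = 1 ∧ j = 2) ∨ (i = 2 ∧ j = 1) ∨
     (i = 2 ∧ j = 3) ∨ (i = 3 ∧ j = 2) then 1 else 0

/-- The special (non-symmetric) score vector, natural-number version. -/
def v0n : Fin 4 → ℕ := fun i =>
  if i = 0 then 13 else if i = 1 then 22 else if i = 2 then 21 else 10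

/-- The special (non-symmetric) score vector. -/
def v0 : Fin 4 → ℝ := fun i => (v0n i : ℝ)

instance instFintypeMatches {n : ℕ} (P : RP n) (i : Fin n) : Fintype (P.Matches i) :=
  inferInstanceAs (Fintype (Σ k : Fin n, Fin (P.M i k)))

noncomputable section

def sOf {n : ℕ} (P : RP n) (i : Fin n) : ℝ := ∑ k, P.R i k

def SS (P : RP 4) : ℝ := ∑ i, ∑ k, (P.M i k : ℝ)

def al (P : RP 4) : ℝ := 1 / (2 * SS P + 2)

def T (P : RP 4) (v : Fin 4 → ℝ) : Fin 4 → ℝ :=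
  fun i => al P * (sOf P i + ∑ k, (P.M i k : ℝ) * v k)

lemma SS_nonneg (P : RP 4) : 0 ≤ SS P :=
  Finset.sum_nonneg fun i _ => Finset.sum_nonneg fun k _ => by positivity

lemma al_pos (P : RP 4) : 0 < al P := by
  have := SS_nonneg P; unfold al; positivity

lemma row_le (P : RP 4) (i : Fin 4) : ∑ k, (P.M i k : ℝ) ≤ SS P :=
  Finset.single_le_sum (f := fun a => ∑ k, (P.M a k : ℝ))
    (fun a _ => Finset.sum_nonneg fun k _ => by positivity) (Finset.mem_univ i)

lemma al_row (P : RP 4) (i : Fin 4) : al P * ∑ k, (P.M i k : ℝ) ≤ 1 / 2 := by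
  have h1 := row_le P i
  have hd : (0:ℝ) < 2 * SS P + 2 := by have := SS_nonneg P; linarith
  rw [al, div_mul_eq_mul_div, one_mul, div_le_iff₀ hd]
  linarith

lemma contracting (P : RP 4) : ContractingWith (1/2 : NNReal) (T P) := by
  constructor
  · rw [← NNReal.coe_lt_coe]; push_cast; norm_num
  · apply LipschitzWith.of_dist_le_mul
    intro v w
    have hco : ((1/2 : NNReal) : ℝ) = 1/2 := by norm_num
    have hb : (0:ℝ) ≤ ((1/2 : NNReal) : ℝ) * dist v w := by positivity
    rw [dist_pi_le_iff hb]
    intro i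
    have hdiff : T P v i - T P w i = al P * ∑ k, (P.M i k : ℝ) * (v k - w k) := by
      have h1 : ∑ k, (P.M i k : ℝ) * (v k - w k)
          = ∑ k, (P.M i k : ℝ) * v k - ∑ k, (P.M i k : ℝ) * w k := by
        rw [← Finset.sum_sub_distrib]
        exact Finset.sum_congr rfl fun k _ => mul_sub _ _ _
      unfold T
      rw [h1]; ring
    rw [Real.dist_eq, hdiff, abs_mul, abs_of_pos (al_pos P), hco]
    have habs : |∑ k, (P.M i k : ℝ) * (v k - w k)| ≤ ∑ k, (P.M i k : ℝ) * dist v w := by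
      refine (Finset.abs_sum_le_sum_abs _ _).trans (Finset.sum_le_sum fun k _ => ?_)
      rw [abs_mul, abs_of_nonneg (by positivity : (0:ℝ) ≤ (P.M i k : ℝ))]
      exact mul_le_mul_of_nonneg_left
        ((Real.dist_eq (v k) (w k) ▸ dist_le_pi_dist v w k)) (by positivity)
    calc al P * |∑ k, (P.M i k : ℝ) * (v k - w k)|
        ≤ al P * ∑ k, (P.M i k : ℝ) * dist v w :=
          mul_le_mul_of_nonneg_left habs (le_of_lt (al_pos P))
      _ = (al P * ∑ k, (P.M i k : ℝ)) * dist v w := by rw [← Finset.sum_mul]; ring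
      _ ≤ (1/2) * dist v w :=
          mul_le_mul_of_nonneg_right (al_row P i) dist_nonneg

def fGen (P : RP 4) : Fin 4 → ℝ := ContractingWith.fixedPoint (T P) (contracting P)

lemma fGen_eq (P : RP 4) (a : Fin 4) :
    fGen P a = al P * (sOf P a + ∑ k, (P.M a k : ℝ) * fGen P k) := by
  have h := (contracting P).fixedPoint_isFixedPt
  conv_lhs => rw [fGen, ← h]
  rfl

open Classical in
def f (P : RP 4) : Fin 4 → ℝ :=
  if P.M = M0 ∧ P.R = (fun _ _ => 0) then v0 else fGen P

lemma sum_matches {n : ℕ} (P : RP n) (a : Fin n) (g : Fin n → ℕ → ℝ) :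
    ∑ m : P.Matches a, g m.1 m.2.1 = ∑ k, ∑ t ∈ Finset.range (P.M a k), g k t := by
  show ∑ m : (Σ k : Fin n, Fin (P.M a k)), g m.1 m.2.1 = _
  rw [← Finset.univ_sigma_univ, Finset.sum_sigma]
  exact Finset.sum_congr rfl fun k _ => Fin.sum_univ_eq_sum_range (g k) _

lemma sum_matches_f {n : ℕ} (P : RP n) (a : Fin n) (g : Fin n → ℝ) :
    ∑ m : P.Matches a, g m.1 = ∑ k, (P.M a k : ℝ) * g k := by
  rw [sum_matches P a (fun k _ => g k)]
  exact Finset.sum_congr rfl fun k _ => by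
    rw [Finset.sum_const, Finset.card_range, nsmul_eq_mul]

lemma sum_matches_res {n : ℕ} (P : RP n) (d : P.Decomp) (a : Fin n) :
    ∑ m : P.Matches a, d.res a m.1 m.2.1 = sOf P a := by
  rw [sum_matches]
  exact Finset.sum_congr rfl fun k _ => d.sum a k

/-- The generic branch satisfies the self-consistency conclusions. -/
lemma gen_key (P : RP 4) (d : P.Decomp) (i j : Fin 4) (e : P.Matches i ≃ P.Matches j)
    (w : Fin 4 → ℝ) (hw : ∀ a, w a = al P * (sOf P a + ∑ k, (P.M a k : ℝ) * w k))
    (hyp : ∀ m : P.Matches i,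
      d.res i m.1 m.2.1 ≥ d.res j (e m).1 (e m).2.1 ∧ w m.1 ≥ w (e m).1) :
    w i ≥ w j ∧
    ((∃ m : P.Matches i,
        d.res i m.1 m.2.1 > d.res j (e m).1 (e m).2.1 ∨ w m.1 > w (e m).1) →
      w i > w j) := by
  set F : P.Matches i → ℝ := fun m => d.res i m.1 m.2.1 + w m.1 with hF
  set G : P.Matches i → ℝ := fun m => d.res j (e m).1 (e m).2.1 + w (e m).1 with hG
  have hFG : ∀ m, G m ≤ F m := fun m => add_le_add (hyp m).1 (hyp m).2
  have hsumF : ∑ m, F m = sOf P i + ∑ k, (P.M i k : ℝ) * w k := by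
    rw [hF, Finset.sum_add_distrib, sum_matches_res, sum_matches_f]
  have hsumG : ∑ m, G m = sOf P j + ∑ k, (P.M j k : ℝ) * w k := by
    have h1 : ∑ m, G m = ∑ m' : P.Matches j, (d.res j m'.1 m'.2.1 + w m'.1) :=
      Equiv.sum_comp e (fun m' => d.res j m'.1 m'.2.1 + w m'.1)
    rw [h1, Finset.sum_add_distrib, sum_matches_res, sum_matches_f]
  have hdiff : w i - w j = al P * (∑ m, F m - ∑ m, G m) := by
    rw [hw i, hw j, hsumF, hsumG]; ring
  have hal := al_pos P
  constructor
  · have hs : ∑ m, G m ≤ ∑ m, F m := Finset.sum_le_sum fun m _ => hFG m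
    nlinarith
  · rintro ⟨m, hm⟩
    have hstrict : G m < F m := by
      rcases hm with h | h
      · have := (hyp m).2; simp only [hF, hG]; linarith
      · have := (hyp m).1; simp only [hF, hG]; linarith
    have hs : ∑ m, G m < ∑ m, F m :=
      Finset.sum_lt_sum (fun m _ => hFG m) ⟨m, Finset.mem_univ m, hstrict⟩
    nlinarith

lemma card_matches {n : ℕ} (P : RP n) (a : Fin n) :
    Fintype.card (P.Matches a) = ∑ k, P.M a k := by
  show Fintype.card (Σ k : Fin n, Fin (P.M a k)) = _
  simp [Fintype.card_sigma]

lemma numer_weak_nat : ∀ i j : Fin 4, (∑ k, M0 i k = ∑ k, M0 j k) →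
    (∑ k, M0 j k * v0n k ≤ ∑ k, M0 i k * v0n k) → v0n j ≤ v0n i := by decide

lemma numer_strict_nat : ∀ i j : Fin 4, (∑ k, M0 i k = ∑ k, M0 j k) →
    (∑ k, M0 j k * v0n k < ∑ k, M0 i k * v0n k) → v0n j < v0n i := by decide

lemma sum_cast (a : Fin 4) : ∑ k, (M0 a k : ℝ) * v0 k = ((∑ k, M0 a k * v0n k : ℕ) : ℝ) := by
  push_cast [v0]
  rfl

lemma numer_weak (i j : Fin 4) (hc : ∑ k, M0 i k = ∑ k, M0 j k)
    (hB : ∑ k, (M0 i k : ℝ) * v0 k ≥ ∑ k, (M0 j k : ℝ) * v0 k) : v0 i ≥ v0 j := by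
  rw [sum_cast, sum_cast] at hB
  simp only [v0, ge_iff_le, Nat.cast_le]
  exact numer_weak_nat i j hc (by exact_mod_cast hB)

lemma numer_strict (i j : Fin 4) (hc : ∑ k, M0 i k = ∑ k, M0 j k)
    (hB : ∑ k, (M0 i k : ℝ) * v0 k > ∑ k, (M0 j k : ℝ) * v0 k) : v0 i > v0 j := by
  rw [sum_cast, sum_cast] at hB
  simp only [v0, gt_iff_lt, Nat.cast_lt]
  exact numer_strict_nat i j hc (by exact_mod_cast hB)

/-- The special branch satisfies the self-consistency conclusions. -/
lemma special_key (P : RP 4) (hM : P.M = M0) (hR : P.R = fun _ _ => (0:ℝ))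
    (d : P.Decomp) (i j : Fin 4) (e : P.Matches i ≃ P.Matches j)
    (hyp : ∀ m : P.Matches i,
      d.res i m.1 m.2.1 ≥ d.res j (e m).1 (e m).2.1 ∧ v0 m.1 ≥ v0 (e m).1) :
    v0 i ≥ v0 j ∧
    ((∃ m : P.Matches i,
        d.res i m.1 m.2.1 > d.res j (e m).1 (e m).2.1 ∨ v0 m.1 > v0 (e m).1) →
      v0 i > v0 j) := by
  have hres0 : ∀ (a : Fin 4) (m : P.Matches a), d.res a m.1 m.2.1 = 0 := by
    intro a m
    have hpos : 0 < P.M a m.1 := lt_of_le_of_lt (Nat.zero_le _) m.2.isLt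
    have hle : ∀ x y : Fin 4, M0 x y ≤ 1 := by decide
    have hMa : P.M a m.1 = M0 a m.1 := congrFun (congrFun hM a) m.1
    have h1 : P.M a m.1 = 1 := by
      rw [hMa] at hpos ⊢
      have := hle a m.1; omega
    have h2 : (m.2 : ℕ) = 0 := by
      have := m.2.isLt; omega
    have hs := d.sum a m.1
    rw [h1, Finset.sum_range_one] at hs
    rw [h2, hs, hR]
  have hc : ∑ k, M0 i k = ∑ k, M0 j k := by
    have h := Fintype.card_congr e
    rw [card_matches, card_matches, hM] at h
    exact h
  constructor
  · refine numer_weak i j hc ?_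
    have hB : ∑ k, (P.M i k : ℝ) * v0 k ≥ ∑ k, (P.M j k : ℝ) * v0 k := by
      rw [← sum_matches_f P i v0, ← sum_matches_f P j v0,
        ← Equiv.sum_comp e (fun m' : P.Matches j => v0 m'.1)]
      exact Finset.sum_le_sum fun m _ => (hyp m).2
    rw [hM] at hB
    exact hB
  · rintro ⟨m, hm⟩
    refine numer_strict i j hc ?_
    have hv : v0 m.1 > v0 (e m).1 := by
      rcases hm with h | h
      · rw [hres0 i m, hres0 j (e m)] at h; linarith
      · exact h
    have hBs : ∑ k, (P.M i k : ℝ) * v0 k > ∑ k, (P.M j k : ℝ) * v0 k := by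
      rw [← sum_matches_f P i v0, ← sum_matches_f P j v0,
        ← Equiv.sum_comp e (fun m' : P.Matches j => v0 m'.1)]
      exact Finset.sum_lt_sum (fun m _ => (hyp m).2) ⟨m, Finset.mem_univ m, hv⟩
    rw [hM] at hBs
    exact hBs

/-- The path-of-draws ranking problem. -/
def P0 : RP 4 where
  R := fun _ _ => 0
  M := M0
  skew := by intro i j; norm_num
  symm := by decide
  bound := by intro i j; rw [abs_zero]; positivity

/-- The permutation (0 3)(1 2). -/
def cperm : Equiv.Perm (Fin 4) :=
  ⟨![3, 2, 1, 0], ![3, 2, 1, 0], by decide, by decide⟩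

lemma v0_zero : v0 0 = 13 := by
  show ((v0n 0 : ℕ) : ℝ) = 13
  norm_num [show v0n 0 = 13 from rfl]

lemma v0_one : v0 1 = 22 := by
  show ((v0n 1 : ℕ) : ℝ) = 22
  norm_num [show v0n 1 = 22 from rfl]

lemma v0_three : v0 3 = 10 := by
  show ((v0n 3 : ℕ) : ℝ) = 10
  norm_num [show v0n 3 = 10 from rfl]

lemma f_spec (P : RP 4) (h : P.M = M0 ∧ P.R = (fun _ _ => 0)) : f P = v0 := by
  simp only [f]; rw [if_pos h]

end

end SCAux

theorem sc_without_neu_sym :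
    ∃ f : RP 4 → Fin 4 → ℝ, SC f ∧ ¬ NEU f ∧ ¬ SYM f := by
  classical
  refine ⟨SCAux.f, ?_, ?_, ?_⟩
  · intro P d i j e hyp
    by_cases hsp : P.M = SCAux.M0 ∧ P.R = (fun _ _ => 0)
    · have hf : SCAux.f P = SCAux.v0 := SCAux.f_spec P hsp
      rw [hf] at hyp ⊢
      exact SCAux.special_key P hsp.1 hsp.2 d i j e hyp
    · have hf : SCAux.f P = SCAux.fGen P := by
        simp only [SCAux.f]; rw [if_neg hsp]
      rw [hf] at hyp ⊢
      exact SCAux.gen_key P d i j e (SCAux.fGen P) (SCAux.fGen_eq P) hyp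
  · intro h
    have h0 := h SCAux.cperm SCAux.P0 0
    have h1 : SCAux.f SCAux.P0 = SCAux.v0 := SCAux.f_spec _ ⟨rfl, rfl⟩
    have h2 : SCAux.f (SCAux.P0.relabel SCAux.cperm) = SCAux.v0 := by
      refine SCAux.f_spec _ ⟨?_, rfl⟩
      funext a b
      show SCAux.P0.M (SCAux.cperm.symm a) (SCAux.cperm.symm b) = SCAux.M0 a b
      revert a b; decide
    rw [h1, h2] at h0
    have h3 : SCAux.cperm 0 = 3 := by decide
    rw [h3, SCAux.v0_zero, SCAux.v0_three] at h0
    norm_num at h0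
  · intro h
    have h0 := h SCAux.P0 (fun _ _ => rfl) 0 1
    rw [SCAux.f_spec _ ⟨rfl, rfl⟩, SCAux.v0_zero, SCAux.v0_one] at h0
    norm_num at h0
end

section
/- If a scoring method f satisfies order preservation, then for any ranking problem (R,M) in which all players have played the same number of matches, f_i(R,M) ≥ f_j(R,M) together with f_i(-R,M) > f_j(-R,M) leads to f_i(O,2M) > f_j(O,2M); consequently, if f additionally satisfies symmetry, then f_i(R,M) ≥ f_j(R,M) implies f_i(-R,M) ≤ f_j(-R,M) on such balanced ranking problems. -/
open Finset

theorem op_balanced_inversion {n : ℕ} (f : RP n → Fin n → ℝ) (hOP : OP f) :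
    (∀ P : RP n, ∀ m : ℕ, RPBalanced P m → ∀ i j : Fin n,
      f P i ≥ f P j → f P.neg i > f P.neg j →
        f (P.add P.neg) i > f (P.add P.neg) j) ∧
    (SYM f → ∀ P : RP n, ∀ m : ℕ, RPBalanced P m → ∀ i j : Fin n,
      f P i ≥ f P j → f P.neg i ≤ f P.neg j) := by
  have key : ∀ P : RP n, ∀ m : ℕ, RPBalanced P m → ∀ i j : Fin n,
      f P i ≥ f P j → f P.neg i > f P.neg j →
        f (P.add P.neg) i > f (P.add P.neg) j := by
    intro P m hB i j hij hneg
    exact ((hOP P P.neg m m hB hB i j hij (le_of_lt hneg)).2 (Or.inr hneg))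
  refine ⟨key, ?_⟩
  intro hSYM P m hB i j hij
  by_contra h
  push_neg at h
  have := key P m hB i j hij h
  have heq := hSYM (P.add P.neg) (fun a b => by simp [RP.add, RP.neg]) i j
  linarith
end
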